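/- Let L be a hyperbolic lattice and suppose g, g' ∈ Aut(𝒟_L) each fix a unique cusp, e and e' respectively, and that g and g' commute with g' of infinite order. If g(e') ≠ e' then g' fixes the vector e' + g(e') of positive square, contradicting that g' has infinite order; hence g(e') = e'. -/

import Mathlib

section ChamberMachinery

variable {L : Type*} [AddCommGroup L] [Module ℤ L]

/-- An isometry of the lattice `(L, B)`. -/
def IsIsometry (B : L →ₗ[ℤ] L →ₗ[ℤ] ℤ) (g : L ≃ₗ[ℤ] L) : Prop :=
  ∀ x y : L, B (g x) (g y) = B x y

/-- `x₀` is a point of the positive cone lying on no mirror of a `(−2)`-root; it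
determines a fundamental chamber `𝒟_L` for the Weyl group. -/
def GenericPoint (B : L →ₗ[ℤ] L →ₗ[ℤ] ℤ) (x₀ : L) : Prop :=
  0 < B x₀ x₀ ∧ ∀ r : L, B r r = -2 → B x₀ r ≠ 0

/-- The `(−2)`-roots that are positive with respect to the chamber determined by `x₀`. -/
def PosRoots (B : L →ₗ[ℤ] L →ₗ[ℤ] ℤ) (x₀ : L) : Set L :=
  {r : L | B r r = -2 ∧ 0 < B x₀ r}

/-- A vector is fundamental if it lies in the (closure of the) fundamental chamber
`𝒟_L` determined by `x₀`, i.e. it lies in the closure of the positive cone and pairs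
nonnegatively with all positive `(−2)`-roots. -/
def IsFund (B : L →ₗ[ℤ] L →ₗ[ℤ] ℤ) (x₀ : L) (v : L) : Prop :=
  0 ≤ B v v ∧ 0 ≤ B v x₀ ∧ ∀ r ∈ PosRoots B x₀, 0 ≤ B v r

/-- A nonzero vector is positive if it has nonnegative inner product with all
fundamental vectors. -/
def IsPosVec (B : L →ₗ[ℤ] L →ₗ[ℤ] ℤ) (x₀ : L) (v : L) : Prop :=
  v ≠ 0 ∧ ∀ u : L, IsFund B x₀ u → 0 ≤ B v u

/-- A positive `(−2)`-root `r` is simple if `r − r'` is not positive for any other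
positive `(−2)`-root `r'`. -/
def IsSimpleRoot (B : L →ₗ[ℤ] L →ₗ[ℤ] ℤ) (x₀ : L) (r : L) : Prop :=
  r ∈ PosRoots B x₀ ∧ ∀ r' ∈ PosRoots B x₀, r' ≠ r → ¬ IsPosVec B x₀ (r - r')

/-- A primitive vector of a lattice. -/
def IsPrimitiveVec (v : L) : Prop := ∀ (m : ℤ) (u : L), v = m • u → IsUnit m

/-- A cusp of the fundamental domain: a primitive isotropic vector in `L ∩ 𝒟_L`. -/
def IsLatticeCusp (B : L →ₗ[ℤ] L →ₗ[ℤ] ℤ) (x₀ : L) (e : L) : Prop :=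
  B e e = 0 ∧ IsPrimitiveVec e ∧ IsFund B x₀ e

end ChamberMachinery


section MyAux

variable {L : Type*} [AddCommGroup L] [Module ℤ L]

lemma aux_expand_left (B : L →ₗ[ℤ] L →ₗ[ℤ] ℤ) (c₁ c₂ : ℤ) (x y z : L) :
    B (c₁ • x - c₂ • y) z = c₁ * B x z - c₂ * B y z := by
  simp only [map_sub, map_zsmul, LinearMap.sub_apply, LinearMap.smul_apply, smul_eq_mul]

lemma aux_expand_right (B : L →ₗ[ℤ] L →ₗ[ℤ] ℤ) (c₁ c₂ : ℤ) (x y z : L) :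
    B z (c₁ • x - c₂ • y) = c₁ * B z x - c₂ * B z y := by
  simp only [map_sub, map_zsmul, smul_eq_mul]

lemma aux_expand_sq (B : L →ₗ[ℤ] L →ₗ[ℤ] ℤ) (c₁ c₂ : ℤ) (x y : L) :
    B (c₁ • x - c₂ • y) (c₁ • x - c₂ • y) =
      c₁ * c₁ * B x x - c₁ * c₂ * B x y - c₂ * c₁ * B y x + c₂ * c₂ * B y y := by
  rw [aux_expand_left, aux_expand_right, aux_expand_right]
  ring

/-- The orthogonal complement of any vector of positive square is negative definite. -/
lemma aux_perp_neg (B : L →ₗ[ℤ] L →ₗ[ℤ] ℤ)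
    (hsym : ∀ x y : L, B x y = B y x)
    (v : L) (hv : 0 < B v v) (hvperp : ∀ x : L, B v x = 0 → x ≠ 0 → B x x < 0)
    (w : L) (hw : 0 < B w w) :
    ∀ x : L, B w x = 0 → x ≠ 0 → B x x < 0 := by
  intro x hwx hx
  have hxw : B x w = 0 := by rw [hsym]; exact hwx
  have hne_of_pos : ∀ z : L, B z z ≠ 0 → z ≠ 0 := by
    intro z hz h0; apply hz; simp [h0]
  rcases lt_trichotomy (B x x) 0 with h | h | h
  · exact h
  · -- x isotropic, orthogonal to timelike w : contradiction
    exfalso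
    have hvx : B v x ≠ 0 := by
      intro h0
      have := hvperp x h0 hx
      omega
    set s : L := (B v x) • w - (B v w) • x with hs
    have hvs : B v s = 0 := by
      rw [hs, aux_expand_right]; ring
    have hss : B s s = (B v x) * (B v x) * (B w w) := by
      rw [hs, aux_expand_sq, hwx, hxw, h]; ring
    have hsspos : 0 < B s s := by
      rw [hss]
      exact mul_pos (mul_self_pos.mpr hvx) hw
    have hs0 : s ≠ 0 := hne_of_pos s (by omega)
    have := hvperp s hvs hs0
    omega
  · -- x of positive square, orthogonal to w : 2-dim positive plane, contradiction
    exfalso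
    have hva : B v w ≠ 0 := by
      intro h0
      have hw0 : w ≠ 0 := hne_of_pos w (by omega)
      have := hvperp w h0 hw0
      omega
    set t : L := (B v x) • w - (B v w) • x with ht
    have hvt : B v t = 0 := by
      rw [ht, aux_expand_right]; ring
    have htt : B t t = (B v x) * (B v x) * (B w w) + (B v w) * (B v w) * (B x x) := by
      rw [ht, aux_expand_sq, hwx, hxw]; ring
    have httpos : 0 < B t t := by
      rw [htt]
      have h1 : 0 ≤ (B v x) * (B v x) * (B w w) :=
        mul_nonneg (mul_self_nonneg _) hw.le
      have h2 : 0 < (B v w) * (B v w) * (B x x) :=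
        mul_pos (mul_self_pos.mpr hva) h
      omega
    have ht0 : t ≠ 0 := hne_of_pos t (by omega)
    have := hvperp t hvt ht0
    omega

/-- Two isotropic vectors on the positive side of the cone pair nonnegatively;
they pair to zero exactly when they are proportional. -/
lemma aux_two_isotropic (B : L →ₗ[ℤ] L →ₗ[ℤ] ℤ)
    (hsym : ∀ x y : L, B x y = B y x)
    (v : L) (hv : 0 < B v v) (hvperp : ∀ x : L, B v x = 0 → x ≠ 0 → B x x < 0)
    (x₀ : L) (hx₀ : 0 < B x₀ x₀)
    (a b : L) (haa : B a a = 0) (hbb : B b b = 0)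
    (hax : 0 < B a x₀) (hbx : 0 < B b x₀) :
    0 ≤ B a b ∧ (B a b = 0 → (B b x₀) • a = (B a x₀) • b) := by
  set d : L := (B b x₀) • a - (B a x₀) • b with hd
  have hx₀d : B x₀ d = 0 := by
    rw [hd, aux_expand_right, hsym x₀ a, hsym x₀ b]; ring
  by_cases hdz : d = 0
  · have hprop : (B b x₀) • a = (B a x₀) • b := by
      have h0 : (B b x₀) • a - (B a x₀) • b = 0 := hdz
      exact sub_eq_zero.mp h0
    have hab0 : B a b = 0 := by
      have hdb : B d b = 0 := by rw [hdz]; simp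
      rw [hd, aux_expand_left, hbb] at hdb
      have h1 : (B b x₀) * (B a b) = 0 := by linarith
      rcases mul_eq_zero.mp h1 with h | h
      · omega
      · exact h
    exact ⟨hab0.ge, fun _ => hprop⟩
  · have hdd : B d d < 0 := aux_perp_neg B hsym v hv hvperp x₀ hx₀ d hx₀d hdz
    have hdd' : B d d = -2 * (B b x₀) * (B a x₀) * (B a b) := by
      rw [hd, aux_expand_sq, haa, hbb, hsym b a]; ring
    have hpos : 0 < B a b := by nlinarith [mul_pos hbx hax]
    exact ⟨hpos.le, fun h => absurd h (by omega)⟩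

end MyAux

/-- from the proof of Theorem 3.9, (b) ⇒ (c): let `g, g' ∈ Aut(𝒟_L)`
be commuting symmetries of a hyperbolic lattice, each fixing a unique cusp (`e` and
`e'` respectively), with `g'` of infinite order.  Then `g(e') = e'` (if `g(e') ≠ e'`
then `g'` would fix the vector `e' + g(e')` of positive square, contradicting that
`g'` has infinite order). -/
theorem stmt18 (L : Type*) [AddCommGroup L] [Module ℤ L]
    [Module.Free ℤ L] [Module.Finite ℤ L]
    (B : L →ₗ[ℤ] L →ₗ[ℤ] ℤ)
    (hsym : ∀ x y : L, B x y = B y x)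
    (heven : ∀ x : L, ∃ c : ℤ, B x x = 2 * c)
    (hnondeg : ∀ x : L, (∀ y : L, B x y = 0) → x = 0)
    (hhyp : ∃ v : L, 0 < B v v ∧ ∀ x : L, B v x = 0 → x ≠ 0 → B x x < 0)
    (x₀ : L) (hx₀ : GenericPoint B x₀)
    (g g' : L ≃ₗ[ℤ] L)
    (hgiso : IsIsometry B g) (hg'iso : IsIsometry B g')
    (hgD : ⇑g '' PosRoots B x₀ = PosRoots B x₀)
    (hg'D : ⇑g' '' PosRoots B x₀ = PosRoots B x₀)
    (e e' : L) (he : IsLatticeCusp B x₀ e) (he' : IsLatticeCusp B x₀ e')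
    (hge : g e = e) (hg'e' : g' e' = e')
    -- e is the unique cusp fixed by g, e' the unique cusp fixed by g'
    (huniqg : ∀ c : L, IsLatticeCusp B x₀ c → g c = c → c = e)
    (huniqg' : ∀ c : L, IsLatticeCusp B x₀ c → g' c = c → c = e')
    (hcomm : g * g' = g' * g)
    (hinf : ¬ IsOfFinOrder g') :
    g e' = e' := by
  obtain ⟨v, hv, hvperp⟩ := hhyp
  have hx₀pos : 0 < B x₀ x₀ := hx₀.1
  have hperpx₀ : ∀ x : L, B x₀ x = 0 → x ≠ 0 → B x x < 0 :=
    aux_perp_neg B hsym v hv hvperp x₀ hx₀pos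
  -- primitive vectors are nonzero
  have hprim_ne : ∀ z : L, IsPrimitiveVec z → z ≠ 0 := by
    intro z hz h0
    have := hz 0 0 (by simp [h0])
    simpa using this
  have he0 : e ≠ 0 := hprim_ne e he.2.1
  have he'0 : e' ≠ 0 := hprim_ne e' he'.2.1
  set f := g e' with hf
  have hf0 : f ≠ 0 := by
    intro h
    have h2 : g e' = g 0 := by rw [map_zero]; exact h
    exact he'0 (g.injective h2)
  have hff : B f f = 0 := by rw [hf, hgiso e' e']; exact he'.1
  have hfprim : IsPrimitiveVec f := by
    intro m u hmu
    apply he'.2.1 m (g.symm u)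
    rw [hf] at hmu
    have h2 := congrArg (⇑g.symm) hmu
    simpa only [LinearEquiv.symm_apply_apply, map_zsmul] using h2
  -- nonzero isotropic vectors in the closed cone pair positively with x₀
  have hpos_of : ∀ z : L, z ≠ 0 → B z z = 0 → 0 ≤ B z x₀ → 0 < B z x₀ := by
    intro z hz0 hzz hle
    rcases hle.lt_or_eq with h | h
    · exact h
    · exfalso
      have := hperpx₀ z (by rw [hsym]; exact h.symm) hz0
      omega
  have hex₀ : 0 < B e x₀ := hpos_of e he0 he.1 he.2.2.2.1
  have he'x₀ : 0 < B e' x₀ := hpos_of e' he'0 he'.1 he'.2.2.2.1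
  -- the crucial step: g e' stays on the positive side of the cone
  have hfx₀ : 0 ≤ B f x₀ := by
    by_contra hneg
    push_neg at hneg
    have hnff : B (-f) (-f) = 0 := by simp [hff]
    have hnfx₀ : 0 < B (-f) x₀ := by
      simp only [map_neg, LinearMap.neg_apply]
      omega
    obtain ⟨h1, h1'⟩ := aux_two_isotropic B hsym v hv hvperp x₀ hx₀pos e e'
      he.1 he'.1 hex₀ he'x₀
    obtain ⟨h2, h2'⟩ := aux_two_isotropic B hsym v hv hvperp x₀ hx₀pos e (-f)
      he.1 hnff hex₀ hnfx₀
    have hbef : B e f = B e e' := by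
      calc B e f = B (g e) (g e') := by rw [hge]
        _ = B e e' := hgiso e e'
    have hBenf : B e (-f) = - B e e' := by
      rw [← hbef]; simp
    have hBee'0 : B e e' = 0 := by omega
    have heq1 : (B e' x₀) • e = (B e x₀) • e' := h1' hBee'0
    have heq2 : (B (-f) x₀) • e = (B e x₀) • (-f) := h2' (by omega)
    have heq1' : (B e' x₀) • e = (B e x₀) • f := by
      rw [hf]
      have h3 := congrArg (⇑g) heq1
      simpa only [map_zsmul, hge] using h3
    have hsum : (B e' x₀) • e + (B (-f) x₀) • e = 0 := by
      rw [heq1', heq2]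
      simp
    have hzero := congrArg (fun z => B z x₀) hsum
    simp only [map_add, map_zsmul, LinearMap.add_apply, LinearMap.smul_apply,
      smul_eq_mul, map_zero, LinearMap.zero_apply, map_neg, LinearMap.neg_apply] at hzero
    simp only [map_neg, LinearMap.neg_apply] at hnfx₀
    nlinarith [hzero, hnfx₀, he'x₀, hex₀]
  -- g e' is a cusp
  have hfund : IsFund B x₀ f := by
    refine ⟨hff.ge, hfx₀, ?_⟩
    intro r hr
    rw [← hgD] at hr
    obtain ⟨r', hr', rfl⟩ := hr
    have : B f (g r') = B e' r' := by rw [hf]; exact hgiso e' r'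
    rw [this]
    exact he'.2.2.2.2 r' hr'
  have hcusp : IsLatticeCusp B x₀ f := ⟨hff, hfprim, hfund⟩
  -- g' fixes g e' since g and g' commute
  have hcge : g (g' e') = g' (g e') := by
    have h := congrArg (fun h : L ≃ₗ[ℤ] L => h e') hcomm
    simp at h
    exact h
  have hg'f : g' f = f := by
    rw [hf, ← hcge, hg'e']
  exact huniqg' f hcusp hg'f
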